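/- (Kim–Lee) Let a ∈ (0,2) with a ≠ 1, let C, λ₊, λ₋, μ₊, μ₋ > 0 and T > 0, and assume λ₊ < 2μ₊ and λ₋ < 2μ₋. Define r : ℝ → ℝ by r(x) = exp(−(λ₊−μ₊)x) for x > 0 and r(x) = exp(−(λ₋−μ₋)|x|) for x < 0, and let ℓ̃(x) = C·e^{−μ₊x}·x^{−a−1} for x > 0, ℓ̃(x) = C·e^{−μ₋|x|}·|x|^{−a−1} for x < 0, ℓ̃(0) = 0. Then T·∫_ℝ (r(x)·log r(x) − r(x) + 1)·ℓ̃(x) dx = T·C·Γ(−a)·( ((a−1)·λ₊^{a} − a·μ₊·λ₊^{a−1} + μ₊^{a}) + ((a−1)·λ₋^{a} − a·μ₋·λ₋^{a−1} + μ₋^{a}) ). -/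

import Mathlib

open MeasureTheory Real Set

/-- The CTS (classical tempered stable) Lévy density with tail index `a`,
scale `C`, and decay rates `θ₊`, `θ₋`. -/
noncomputable def ctsDensity (a C tp tm : ℝ) (x : ℝ) : ℝ :=
  if 0 < x then C * exp (-(tp * x)) * x ^ (-a - 1)
  else if x < 0 then C * exp (-(tm * |x|)) * |x| ^ (-a - 1)
  else 0

namespace KimLeeAux

noncomputable def h (l m x : ℝ) : ℝ :=
  exp (-(m*x)) - exp (-(l*x)) - (l-m)*x*exp (-(l*x))

noncomputable def h1 (l m x : ℝ) : ℝ :=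
  m*(exp (-(l*x)) - exp (-(m*x))) + l*(l-m)*x*exp (-(l*x))

noncomputable def h2 (l m x : ℝ) : ℝ :=
  (l^2 - 2*l*m)*exp (-(l*x)) + m^2*exp (-(m*x)) - l^2*(l-m)*x*exp (-(l*x))

lemma exp_deriv (b x : ℝ) : HasDerivAt (fun y : ℝ => exp (-(b*y))) (-b * exp (-(b*x))) x := by
  have h1 : HasDerivAt (fun y : ℝ => -(b*y)) (-b) x := by
    simpa using ((hasDerivAt_id x).const_mul b).fun_neg
  simpa [mul_comm] using h1.exp

lemma xexp_deriv (b x : ℝ) :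
    HasDerivAt (fun y : ℝ => y * exp (-(b*y))) (exp (-(b*x)) - b * x * exp (-(b*x))) x := by
  have := (hasDerivAt_id x).fun_mul (exp_deriv b x)
  exact this.congr_deriv (by simp only [id]; ring)

lemma h_deriv (l m x : ℝ) : HasDerivAt (h l m) (h1 l m x) x := by
  have := ((exp_deriv m x).fun_sub (exp_deriv l x)).fun_sub (((xexp_deriv l x)).const_mul (l-m))
  refine (this.congr_deriv (show _ = h1 l m x by simp only [h1]; ring)).congr_of_eventuallyEq
    (Filter.Eventually.of_forall fun y => ?_)
  simp only [h]; ring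

lemma h1_deriv (l m x : ℝ) : HasDerivAt (h1 l m) (h2 l m x) x := by
  have := (((exp_deriv l x).fun_sub (exp_deriv m x)).const_mul m).fun_add
    (((xexp_deriv l x)).const_mul (l*(l-m)))
  refine (this.congr_deriv (show _ = h2 l m x by simp only [h2]; ring)).congr_of_eventuallyEq
    (Filter.Eventually.of_forall fun y => ?_)
  simp only [h1]; ring

lemma h_zero (l m : ℝ) : h l m 0 = 0 := by simp [h]

lemma h1_zero (l m : ℝ) : h1 l m 0 = 0 := by simp [h1]

/-- one-sided bound `1 - exp (-t) ≤ t` -/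
lemma one_sub_exp_le (t : ℝ) : 1 - exp (-t) ≤ t := by
  have := Real.add_one_le_exp (-t)
  linarith

lemma abs_exp_sub_exp {l m : ℝ} (hl : 0 < l) (hm : 0 < m) {x : ℝ} (hx : 0 ≤ x) :
    |exp (-(l*x)) - exp (-(m*x))| ≤ |l - m| * x * exp (-(min l m * x)) := by
  rcases le_total l m with hlm | hlm
  · have hmin : min l m = l := min_eq_left hlm
    have h1 : exp (-(m*x)) ≤ exp (-(l*x)) := by
      apply exp_le_exp.2; nlinarith
    rw [abs_of_nonneg (by linarith), hmin, abs_of_nonpos (by linarith : l - m ≤ 0)]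
    have heq : exp (-(l*x)) - exp (-(m*x)) = exp (-(l*x)) * (1 - exp (-((m-l)*x))) := by
      rw [mul_sub, mul_one, ← Real.exp_add]; ring_nf
    have h2 : 1 - exp (-((m-l)*x)) ≤ (m-l)*x := one_sub_exp_le _
    have h4 : exp (-(l*x)) * (1 - exp (-((m-l)*x))) ≤ exp (-(l*x)) * ((m-l)*x) :=
      mul_le_mul_of_nonneg_left h2 (exp_pos _).le
    rw [heq]
    calc exp (-(l*x)) * (1 - exp (-((m-l)*x))) ≤ exp (-(l*x)) * ((m-l)*x) := h4
      _ = -(l - m) * x * exp (-(l*x)) := by ring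
  · have hmin : min l m = m := min_eq_right hlm
    have h1 : exp (-(l*x)) ≤ exp (-(m*x)) := by
      apply exp_le_exp.2; nlinarith
    rw [abs_of_nonpos (by linarith), hmin, abs_of_nonneg (by linarith : (0:ℝ) ≤ l - m)]
    have h2 : 1 - exp (-((l-m)*x)) ≤ (l-m)*x := one_sub_exp_le _
    have h4 : exp (-(m*x)) * (1 - exp (-((l-m)*x))) ≤ exp (-(m*x)) * ((l-m)*x) :=
      mul_le_mul_of_nonneg_left h2 (exp_pos _).le
    calc -(exp (-(l*x)) - exp (-(m*x))) = exp (-(m*x)) * (1 - exp (-((l-m)*x))) := by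
          rw [mul_sub, mul_one, ← Real.exp_add]; ring_nf
      _ ≤ exp (-(m*x)) * ((l-m)*x) := h4
      _ = (l - m) * x * exp (-(m*x)) := by ring

lemma h1_bound {l m : ℝ} (hl : 0 < l) (hm : 0 < m) {x : ℝ} (hx : 0 ≤ x) :
    |h1 l m x| ≤ (m + l) * |l - m| * x * exp (-(min l m * x)) := by
  have hb := abs_exp_sub_exp hl hm hx
  have hle : exp (-(l*x)) ≤ exp (-(min l m * x)) := by
    apply exp_le_exp.2
    have : min l m ≤ l := min_le_left _ _
    nlinarith
  have step1 : |h1 l m x| ≤ m * |exp (-(l*x)) - exp (-(m*x))| + l * |l-m| * (x * exp (-(l*x))) := by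
    rw [h1]
    refine (abs_add_le _ _).trans ?_
    gcongr
    · rw [abs_mul, abs_of_nonneg hm.le]
    · exact le_of_eq (by rw [abs_mul, abs_mul, abs_mul, abs_of_nonneg hl.le, abs_of_nonneg hx,
        abs_of_nonneg (exp_pos _).le]; ring)
  have step2 : m * |exp (-(l*x)) - exp (-(m*x))| ≤ m * (|l-m| * x * exp (-(min l m * x))) :=
    mul_le_mul_of_nonneg_left hb hm.le
  have step3 : l * |l-m| * (x * exp (-(l*x))) ≤ l * |l-m| * (x * exp (-(min l m * x))) := by
    have := mul_le_mul_of_nonneg_left hle hx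
    exact mul_le_mul_of_nonneg_left this (by positivity)
  have final : m * (|l-m| * x * exp (-(min l m * x))) + l * |l-m| * (x * exp (-(min l m * x)))
      = (m + l) * |l - m| * x * exp (-(min l m * x)) := by ring
  linarith [step1, step2, step3]

lemma h_cont (l m : ℝ) : Continuous (h l m) := by
  unfold h; fun_prop

lemma h1_cont (l m : ℝ) : Continuous (h1 l m) := by
  unfold h1; fun_prop

lemma h2_cont (l m : ℝ) : Continuous (h2 l m) := by
  unfold h2; fun_prop

lemma integrableOn_rpow_exp {s b : ℝ} (hs : -1 < s) (hb : 0 < b) :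
    IntegrableOn (fun x : ℝ => x ^ s * exp (-(b*x))) (Ioi 0) := by
  have := integrableOn_rpow_mul_exp_neg_mul_rpow hs zero_lt_one hb
  simpa [Real.rpow_one, neg_mul] using this

lemma h_bound_small {l m : ℝ} (hl : 0 < l) (hm : 0 < m) {x : ℝ} (hx : 0 ≤ x) :
    |h l m x| ≤ ((m + l) * |l - m|) * x^2 / 2 := by
  set K := (m + l) * |l - m| with hK
  have hK0 : 0 ≤ K := by positivity
  have hftc : h l m x = ∫ t in (0:ℝ)..x, h1 l m t := by
    rw [intervalIntegral.integral_eq_sub_of_hasDerivAt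
      (fun t _ => h_deriv l m t) ((h1_cont l m).intervalIntegrable _ _), h_zero, sub_zero]
  have hb1 : ∀ t ∈ Icc (0:ℝ) x, |h1 l m t| ≤ K * t := by
    intro t ht
    refine (h1_bound hl hm ht.1).trans ?_
    have hexp : exp (-(min l m * t)) ≤ 1 := by
      apply exp_le_one_iff.mpr
      have h0 : 0 < min l m := lt_min hl hm
      nlinarith [ht.1]
    have h5 : (m + l) * |l - m| * t * exp (-(min l m * t)) ≤ (m + l) * |l - m| * t * 1 :=
      mul_le_mul_of_nonneg_left hexp (mul_nonneg (by positivity) ht.1)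
    rw [hK]
    linarith
  calc |h l m x| = |∫ t in (0:ℝ)..x, h1 l m t| := by rw [hftc]
    _ ≤ ∫ t in (0:ℝ)..x, |h1 l m t| := by
        exact intervalIntegral.abs_integral_le_integral_abs hx
    _ ≤ ∫ t in (0:ℝ)..x, K * t := by
        apply intervalIntegral.integral_mono_on hx
        · exact ((h1_cont l m).abs.intervalIntegrable _ _)
        · exact (continuous_const.mul continuous_id).intervalIntegrable _ _
        · exact hb1
    _ = K * x^2 / 2 := by
        rw [intervalIntegral.integral_const_mul, integral_id]
        ring

lemma cont_on_rpow (p : ℝ) : ContinuousOn (fun x : ℝ => x ^ p) (Ioi 0) :=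
  fun x hx => (Real.continuousAt_rpow_const x p (Or.inl (ne_of_gt hx))).continuousWithinAt

lemma int_h1 {a l m : ℝ} (ha0 : 0 < a) (ha2 : a < 2) (hl : 0 < l) (hm : 0 < m) :
    IntegrableOn (fun x : ℝ => x ^ (-a) * h1 l m x) (Ioi 0) := by
  set c := min l m with hc
  have hc0 : 0 < c := lt_min hl hm
  set K := (m + l) * |l - m| with hK
  have hK0 : 0 ≤ K := by positivity
  have hg : IntegrableOn (fun x : ℝ => K * (x ^ (1-a) * exp (-(c*x)))) (Ioi 0) :=
    (integrableOn_rpow_exp (by linarith) hc0).const_mul K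
  refine Integrable.mono' hg ?_ ?_
  · exact ((cont_on_rpow (-a)).mul (h1_cont l m).continuousOn).aestronglyMeasurable
      measurableSet_Ioi
  · rw [ae_restrict_iff' measurableSet_Ioi]
    filter_upwards with x hx
    have hx0 : 0 < x := hx
    rw [norm_mul, Real.norm_eq_abs, Real.norm_eq_abs,
      abs_of_nonneg (Real.rpow_nonneg hx0.le _)]
    have hb := h1_bound hl hm hx0.le
    have key : x ^ (-a) * ((m + l) * |l - m| * x * exp (-(min l m * x)))
        = ((m + l) * |l - m|) * (x ^ (1-a) * exp (-(min l m * x))) := by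
      rw [show (1:ℝ)-a = -a + 1 by ring, Real.rpow_add_one hx0.ne']
      ring
    calc x ^ (-a) * |h1 l m x|
        ≤ x ^ (-a) * ((m + l) * |l - m| * x * exp (-(min l m * x))) :=
          mul_le_mul_of_nonneg_left hb (Real.rpow_nonneg hx0.le _)
      _ = K * (x ^ (1-a) * exp (-(c*x))) := by rw [hK, hc]; exact key

lemma int_h2 {a l m : ℝ} (ha2 : a < 2) (hl : 0 < l) (hm : 0 < m) :
    IntegrableOn (fun x : ℝ => x ^ (1-a) * h2 l m x) (Ioi 0) := by
  have i1 : IntegrableOn (fun x : ℝ => x ^ (1-a) * exp (-(l*x))) (Ioi 0) :=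
    integrableOn_rpow_exp (by linarith) hl
  have i2 : IntegrableOn (fun x : ℝ => x ^ (1-a) * exp (-(m*x))) (Ioi 0) :=
    integrableOn_rpow_exp (by linarith) hm
  have i3 : IntegrableOn (fun x : ℝ => x ^ (2-a) * exp (-(l*x))) (Ioi 0) :=
    integrableOn_rpow_exp (by linarith) hl
  have this1 : IntegrableOn (fun x : ℝ => (l^2 - 2*l*m) * (x ^ (1-a) * exp (-(l*x)))
      + m^2 * (x ^ (1-a) * exp (-(m*x))) - l^2*(l-m) * (x ^ (2-a) * exp (-(l*x)))) (Ioi 0) :=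
    ((i1.const_mul (l^2 - 2*l*m)).add (i2.const_mul (m^2))).sub (i3.const_mul (l^2*(l-m)))
  refine this1.congr_fun (fun x hx => ?_) measurableSet_Ioi
  have hx0 : (0:ℝ) < x := hx
  simp only [h2]
  rw [show (2:ℝ)-a = (1-a) + 1 by ring, Real.rpow_add_one hx0.ne']
  ring

lemma int_h {a l m : ℝ} (ha0 : 0 < a) (ha2 : a < 2) (hl : 0 < l) (hm : 0 < m) :
    IntegrableOn (fun x : ℝ => x ^ (-a-1) * h l m x) (Ioi 0) := by
  set K := (m + l) * |l - m| with hK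
  have hK0 : 0 ≤ K := by positivity
  have hmeas : ∀ s : Set ℝ, MeasurableSet s → s ⊆ Ioi 0 →
      AEStronglyMeasurable (fun x : ℝ => x ^ (-a-1) * h l m x) (volume.restrict s) := by
    intro s hs hsub
    exact (((cont_on_rpow (-a-1)).mul (h_cont l m).continuousOn).mono hsub).aestronglyMeasurable hs
  rw [← Ioc_union_Ioi_eq_Ioi (zero_le_one : (0:ℝ) ≤ 1)]
  apply IntegrableOn.union
  · have hg : IntegrableOn (fun x : ℝ => (K/2) * x ^ (1-a)) (Ioc (0:ℝ) 1) := by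
      apply Integrable.const_mul
      exact (intervalIntegral.intervalIntegrable_rpow' (by linarith)).1
    refine Integrable.mono' hg (hmeas _ measurableSet_Ioc Ioc_subset_Ioi_self) ?_
    rw [ae_restrict_iff' measurableSet_Ioc]
    filter_upwards with x hx
    have hx0 : 0 < x := hx.1
    rw [norm_mul, Real.norm_eq_abs, Real.norm_eq_abs,
      abs_of_nonneg (Real.rpow_nonneg hx0.le _)]
    have hb := h_bound_small hl hm hx0.le
    calc x ^ (-a-1) * |h l m x| ≤ x ^ (-a-1) * (K * x^2 / 2) :=
          mul_le_mul_of_nonneg_left hb (Real.rpow_nonneg hx0.le _)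
      _ = (K/2) * (x ^ (-a-1) * x ^ (2:ℝ)) := by rw [Real.rpow_two]; ring
      _ = (K/2) * x ^ (1-a) := by
          rw [← Real.rpow_add hx0, show -a-1+(2:ℝ) = 1-a by ring]
  · have ih : IntegrableOn (fun x : ℝ => |h l m x|) (Ioi 1) := by
      have e1 : IntegrableOn (fun x : ℝ => exp (-(m*x))) (Ioi 0) := by
        simpa [neg_mul] using exp_neg_integrableOn_Ioi 0 hm
      have e2 : IntegrableOn (fun x : ℝ => exp (-(l*x))) (Ioi 0) := by
        simpa [neg_mul] using exp_neg_integrableOn_Ioi 0 hl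
      have e3 : IntegrableOn (fun x : ℝ => x * exp (-(l*x))) (Ioi 0) := by
        refine (integrableOn_rpow_exp (by norm_num : (-1:ℝ) < 1) hl).congr_fun
          (fun x hx => ?_) measurableSet_Ioi
        beta_reduce; rw [Real.rpow_one]
      have : IntegrableOn (h l m) (Ioi 0) := by
        have this2 : IntegrableOn (fun x : ℝ => exp (-(m*x)) - exp (-(l*x))
            - (l-m) * (x * exp (-(l*x)))) (Ioi 0) := (e1.sub e2).sub (e3.const_mul (l-m))
        refine this2.congr_fun (fun x _ => ?_) measurableSet_Ioi
        simp only [h]; ring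
      exact (this.mono_set (Ioi_subset_Ioi zero_le_one)).abs
    refine Integrable.mono' ih (hmeas _ measurableSet_Ioi
      (Ioi_subset_Ioi zero_le_one)) ?_
    rw [ae_restrict_iff' measurableSet_Ioi]
    filter_upwards with x hx
    have hx1 : (1:ℝ) ≤ x := le_of_lt hx
    rw [norm_mul, Real.norm_eq_abs, Real.norm_eq_abs,
      abs_of_nonneg (Real.rpow_nonneg (by linarith) _)]
    have : x ^ (-a-1) ≤ 1 := Real.rpow_le_one_of_one_le_of_nonpos hx1 (by linarith)
    calc x ^ (-a-1) * |h l m x| ≤ 1 * |h l m x| :=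
          mul_le_mul_of_nonneg_right this (abs_nonneg _)
      _ = |h l m x| := one_mul _

lemma int_rpow_exp_eq {s b : ℝ} (hs : 0 < s) (hb : 0 < b) :
    ∫ x in Ioi (0:ℝ), x ^ (s-1) * exp (-(b*x)) = Gamma s * b ^ (-s) := by
  rw [integral_rpow_mul_exp_neg_mul_Ioi hs hb, one_div, ← Real.rpow_neg_one b,
    ← Real.rpow_mul hb.le, mul_comm]
  norm_num

lemma tendsto_pow_exp_neg (n : ℕ) {b : ℝ} (hb : 0 < b) :
    Filter.Tendsto (fun x : ℝ => x^n * exp (-(b*x))) Filter.atTop (nhds 0) := by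
  have hbt : Filter.Tendsto (fun x : ℝ => b * x) Filter.atTop Filter.atTop :=
    Filter.Tendsto.const_mul_atTop hb Filter.tendsto_id
  have h0 := (tendsto_pow_mul_exp_neg_atTop_nhds_zero n).comp hbt
  have h1 := h0.const_mul ((1/b)^n)
  rw [mul_zero] at h1
  refine h1.congr (fun x => ?_)
  simp only [Function.comp_apply, mul_pow, neg_mul]
  field_simp
  rw [← mul_pow, one_div_mul_cancel hb.ne', one_pow, one_mul]

lemma tendsto_exp_neg {b : ℝ} (hb : 0 < b) :
    Filter.Tendsto (fun x : ℝ => exp (-(b*x))) Filter.atTop (nhds 0) := by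
  simpa using tendsto_pow_exp_neg 0 hb

lemma tendsto_xexp_neg {b : ℝ} (hb : 0 < b) :
    Filter.Tendsto (fun x : ℝ => x * exp (-(b*x))) Filter.atTop (nhds 0) := by
  simpa using tendsto_pow_exp_neg 1 hb

lemma tendsto_h_atTop {l m : ℝ} (hl : 0 < l) (hm : 0 < m) :
    Filter.Tendsto (h l m) Filter.atTop (nhds 0) := by
  have := ((tendsto_exp_neg hm).sub (tendsto_exp_neg hl)).sub
    ((tendsto_xexp_neg hl).const_mul (l-m))
  simp only [sub_zero, mul_zero] at this
  refine this.congr (fun x => ?_)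
  simp only [h]; ring

lemma tendsto_xh1_atTop {l m : ℝ} (hl : 0 < l) (hm : 0 < m) :
    Filter.Tendsto (fun x => x * h1 l m x) Filter.atTop (nhds 0) := by
  have t1 := tendsto_xexp_neg hl
  have t2 := tendsto_xexp_neg hm
  have t3 : Filter.Tendsto (fun x : ℝ => x^2 * exp (-(l*x))) Filter.atTop (nhds 0) :=
    tendsto_pow_exp_neg 2 hl
  have := ((t1.sub t2).const_mul m).add (t3.const_mul (l*(l-m)))
  simp only [sub_zero, mul_zero, add_zero, zero_add] at this
  refine this.congr (fun x => ?_)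
  simp only [h1]; ring

lemma icc_mem_nhdsWithin : Icc (0:ℝ) 1 ∈ nhdsWithin (0:ℝ) (Ici 0) := by
  rw [← Ici_inter_Iic]
  exact Filter.inter_mem self_mem_nhdsWithin
    (mem_nhdsWithin_of_mem_nhds (Iic_mem_nhds one_pos))

lemma tendsto_rpow_zero {p : ℝ} (hp : 0 < p) (c : ℝ) :
    Filter.Tendsto (fun x : ℝ => c * x ^ p) (nhdsWithin (0:ℝ) (Ici 0)) (nhds 0) := by
  have hc : ContinuousAt (fun x : ℝ => x ^ p) 0 :=
    Real.continuousAt_rpow_const 0 p (Or.inr hp.le)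
  have h2 : Filter.Tendsto (fun x : ℝ => x ^ p) (nhdsWithin (0:ℝ) (Ici 0))
      (nhds ((0:ℝ) ^ p)) := (hc.tendsto).mono_left nhdsWithin_le_nhds
  rw [Real.zero_rpow (ne_of_gt hp)] at h2
  simpa using h2.const_mul c

lemma ctsA {a l m : ℝ} (ha0 : 0 < a) (ha2 : a < 2) (hl : 0 < l) (hm : 0 < m) :
    ContinuousWithinAt (fun x : ℝ => x ^ (-a) * h l m x) (Ici 0) 0 := by
  set K := (m + l) * |l - m| with hK
  have hK0 : 0 ≤ K := by positivity
  rw [ContinuousWithinAt, show (0:ℝ) ^ (-a) * h l m 0 = 0 by simp [h_zero]]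
  apply squeeze_zero_norm' (a := fun x => (K/2) * x ^ (2-a))
  · filter_upwards [icc_mem_nhdsWithin] with x hx
    rcases eq_or_lt_of_le hx.1 with rfl | hx0
    · simp [h_zero, Real.zero_rpow (by linarith : (2:ℝ)-a ≠ 0)]
    · rw [Real.norm_eq_abs, abs_mul, abs_of_nonneg (Real.rpow_nonneg hx0.le _)]
      have hb := h_bound_small hl hm hx0.le
      calc x ^ (-a) * |h l m x| ≤ x ^ (-a) * (K * x^2 / 2) :=
            mul_le_mul_of_nonneg_left hb (Real.rpow_nonneg hx0.le _)
        _ = (K/2) * (x ^ (-a) * x ^ (2:ℝ)) := by rw [Real.rpow_two]; ring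
        _ = (K/2) * x ^ (2-a) := by
            rw [← Real.rpow_add hx0, show -a+(2:ℝ) = 2-a by ring]
  · exact tendsto_rpow_zero (by linarith) _

lemma ctsB {a l m : ℝ} (ha0 : 0 < a) (ha2 : a < 2) (ha1 : a ≠ 1) (hl : 0 < l) (hm : 0 < m) :
    ContinuousWithinAt (fun x : ℝ => x ^ (1-a) * h1 l m x) (Ici 0) 0 := by
  set K := (m + l) * |l - m| with hK
  have hK0 : 0 ≤ K := by positivity
  rw [ContinuousWithinAt, show (0:ℝ) ^ (1-a) * h1 l m 0 = 0 by simp [h1_zero]]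
  apply squeeze_zero_norm' (a := fun x => K * x ^ (2-a))
  · filter_upwards [icc_mem_nhdsWithin] with x hx
    rcases eq_or_lt_of_le hx.1 with rfl | hx0
    · simp [h1_zero, Real.zero_rpow (by linarith : (2:ℝ)-a ≠ 0)]
    · rw [Real.norm_eq_abs, abs_mul, abs_of_nonneg (Real.rpow_nonneg hx0.le _)]
      have hb := h1_bound hl hm hx0.le
      have hexp : exp (-(min l m * x)) ≤ 1 := by
        apply exp_le_one_iff.mpr
        have h0 : 0 < min l m := lt_min hl hm
        nlinarith [hx.1]
      have hb2 : |h1 l m x| ≤ K * x := by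
        rw [hK]
        have h5 : (m + l) * |l - m| * x * exp (-(min l m * x))
            ≤ (m + l) * |l - m| * x * 1 :=
          mul_le_mul_of_nonneg_left hexp (mul_nonneg (by positivity) hx.1)
        linarith
      calc x ^ (1-a) * |h1 l m x| ≤ x ^ (1-a) * (K * x) :=
            mul_le_mul_of_nonneg_left hb2 (Real.rpow_nonneg hx0.le _)
        _ = K * (x ^ (1-a) * x) := by ring
        _ = K * x ^ (2-a) := by
            rw [← Real.rpow_add_one hx0.ne', show (1:ℝ)-a+1 = 2-a by ring]
  · exact tendsto_rpow_zero (by linarith) _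

lemma tendstoA_atTop {a l m : ℝ} (ha0 : 0 < a) (hl : 0 < l) (hm : 0 < m) :
    Filter.Tendsto (fun x : ℝ => x ^ (-a) * h l m x) Filter.atTop (nhds 0) := by
  apply squeeze_zero_norm' (a := fun x => |h l m x|)
  · filter_upwards [Filter.eventually_ge_atTop (1:ℝ)] with x hx1
    rw [Real.norm_eq_abs, abs_mul, abs_of_nonneg (Real.rpow_nonneg (by linarith) _)]
    have : x ^ (-a) ≤ 1 := Real.rpow_le_one_of_one_le_of_nonpos hx1 (by linarith)
    calc x ^ (-a) * |h l m x| ≤ 1 * |h l m x| :=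
          mul_le_mul_of_nonneg_right this (abs_nonneg _)
      _ = |h l m x| := one_mul _
  · simpa using (tendsto_h_atTop hl hm).abs

lemma tendstoB_atTop {a l m : ℝ} (ha0 : 0 < a) (hl : 0 < l) (hm : 0 < m) :
    Filter.Tendsto (fun x : ℝ => x ^ (1-a) * h1 l m x) Filter.atTop (nhds 0) := by
  apply squeeze_zero_norm' (a := fun x => |x * h1 l m x|)
  · filter_upwards [Filter.eventually_ge_atTop (1:ℝ)] with x hx1
    have hx0 : (0:ℝ) < x := by linarith
    rw [Real.norm_eq_abs, abs_mul, abs_mul, abs_of_nonneg (Real.rpow_nonneg hx0.le _),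
      abs_of_nonneg hx0.le]
    have : x ^ (1-a) ≤ x := by
      calc x ^ (1-a) ≤ x ^ (1:ℝ) :=
            Real.rpow_le_rpow_of_exponent_le hx1 (by linarith)
        _ = x := Real.rpow_one x
    exact mul_le_mul_of_nonneg_right this (abs_nonneg _)
  · simpa using (tendsto_xh1_atTop hl hm).abs

lemma step1 {a l m : ℝ} (ha0 : 0 < a) (ha2 : a < 2) (hl : 0 < l) (hm : 0 < m) :
    ∫ x in Ioi (0:ℝ), x ^ (-a) * h1 l m x
      = a * ∫ x in Ioi (0:ℝ), x ^ (-a-1) * h l m x := by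
  have hderiv : ∀ x ∈ Ioi (0:ℝ), HasDerivAt (fun x : ℝ => x ^ (-a) * h l m x)
      (-a * (x ^ (-a-1) * h l m x) + x ^ (-a) * h1 l m x) x := by
    intro x hx
    have hr : HasDerivAt (fun y : ℝ => y ^ (-a)) (-a * x ^ (-a-1)) x := by
      simpa using Real.hasDerivAt_rpow_const (x := x) (p := -a) (Or.inl (ne_of_gt hx))
    have := hr.fun_mul (h_deriv l m x)
    exact this.congr_deriv (by ring)
  have hint : IntegrableOn
      (fun x : ℝ => -a * (x ^ (-a-1) * h l m x) + x ^ (-a) * h1 l m x) (Ioi 0) :=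
    ((int_h ha0 ha2 hl hm).const_mul (-a)).add (int_h1 ha0 ha2 hl hm)
  have hFTC := integral_Ioi_of_hasDerivAt_of_tendsto (ctsA ha0 ha2 hl hm) hderiv hint
    (tendstoA_atTop ha0 hl hm)
  rw [show (0:ℝ) ^ (-a) * h l m 0 = 0 by simp [h_zero], sub_zero] at hFTC
  have hsplit : ∫ x in Ioi (0:ℝ), (-a * (x ^ (-a-1) * h l m x) + x ^ (-a) * h1 l m x)
      = -a * (∫ x in Ioi (0:ℝ), x ^ (-a-1) * h l m x)
        + ∫ x in Ioi (0:ℝ), x ^ (-a) * h1 l m x := by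
    rw [integral_add ((int_h ha0 ha2 hl hm).const_mul (-a)) (int_h1 ha0 ha2 hl hm),
      integral_const_mul]
  rw [hsplit] at hFTC
  linarith

lemma step2 {a l m : ℝ} (ha0 : 0 < a) (ha2 : a < 2) (ha1 : a ≠ 1) (hl : 0 < l) (hm : 0 < m) :
    ∫ x in Ioi (0:ℝ), x ^ (1-a) * h2 l m x
      = (a-1) * ∫ x in Ioi (0:ℝ), x ^ (-a) * h1 l m x := by
  have hderiv : ∀ x ∈ Ioi (0:ℝ), HasDerivAt (fun x : ℝ => x ^ (1-a) * h1 l m x)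
      ((1-a) * (x ^ (-a) * h1 l m x) + x ^ (1-a) * h2 l m x) x := by
    intro x hx
    have hr : HasDerivAt (fun y : ℝ => y ^ (1-a)) ((1-a) * x ^ (-a)) x := by
      have := Real.hasDerivAt_rpow_const (x := x) (p := 1-a) (Or.inl (ne_of_gt hx))
      convert this using 1
      rw [show (1:ℝ)-a-1 = -a by ring]
    have := hr.fun_mul (h1_deriv l m x)
    exact this.congr_deriv (by ring)
  have hint : IntegrableOn
      (fun x : ℝ => (1-a) * (x ^ (-a) * h1 l m x) + x ^ (1-a) * h2 l m x) (Ioi 0) :=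
    ((int_h1 ha0 ha2 hl hm).const_mul (1-a)).add (int_h2 ha2 hl hm)
  have hFTC := integral_Ioi_of_hasDerivAt_of_tendsto (ctsB ha0 ha2 ha1 hl hm) hderiv hint
    (tendstoB_atTop ha0 hl hm)
  rw [show (0:ℝ) ^ (1-a) * h1 l m 0 = 0 by simp [h1_zero], sub_zero] at hFTC
  have hsplit : ∫ x in Ioi (0:ℝ), ((1-a) * (x ^ (-a) * h1 l m x) + x ^ (1-a) * h2 l m x)
      = (1-a) * (∫ x in Ioi (0:ℝ), x ^ (-a) * h1 l m x)
        + ∫ x in Ioi (0:ℝ), x ^ (1-a) * h2 l m x := by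
    rw [integral_add ((int_h1 ha0 ha2 hl hm).const_mul (1-a)) (int_h2 ha2 hl hm),
      integral_const_mul]
  rw [hsplit] at hFTC
  linarith

lemma int_rpow_exp_eq' {s b : ℝ} (hs : -1 < s) (hb : 0 < b) :
    ∫ x in Ioi (0:ℝ), x ^ s * exp (-(b*x)) = Gamma (s+1) * b ^ (-(s+1)) := by
  have := int_rpow_exp_eq (s := s+1) (by linarith) hb
  simpa using this

lemma I2_value {a l m : ℝ} (ha0 : 0 < a) (ha2 : a < 2) (ha1 : a ≠ 1) (hl : 0 < l) (hm : 0 < m) :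
    ∫ x in Ioi (0:ℝ), x ^ (1-a) * h2 l m x
      = a * (a-1) * Gamma (-a) * ((a-1) * l ^ a - a * m * l ^ (a-1) + m ^ a) := by
  have i1 : IntegrableOn (fun x : ℝ => x ^ (1-a) * exp (-(l*x))) (Ioi 0) :=
    integrableOn_rpow_exp (by linarith) hl
  have i2 : IntegrableOn (fun x : ℝ => x ^ (1-a) * exp (-(m*x))) (Ioi 0) :=
    integrableOn_rpow_exp (by linarith) hm
  have i3 : IntegrableOn (fun x : ℝ => x ^ (2-a) * exp (-(l*x))) (Ioi 0) :=
    integrableOn_rpow_exp (by linarith) hl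
  have hcongr : ∫ x in Ioi (0:ℝ), x ^ (1-a) * h2 l m x
      = ∫ x in Ioi (0:ℝ), ((l^2 - 2*l*m) * (x ^ (1-a) * exp (-(l*x)))
        + m^2 * (x ^ (1-a) * exp (-(m*x))) - l^2*(l-m) * (x ^ (2-a) * exp (-(l*x)))) := by
    refine setIntegral_congr_fun measurableSet_Ioi (fun x hx => ?_)
    have hx0 : (0:ℝ) < x := hx
    simp only [h2]
    rw [show (2:ℝ)-a = (1-a) + 1 by ring, Real.rpow_add_one hx0.ne']
    ring
  have hsplit : ∫ x in Ioi (0:ℝ), ((l^2 - 2*l*m) * (x ^ (1-a) * exp (-(l*x)))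
        + m^2 * (x ^ (1-a) * exp (-(m*x))) - l^2*(l-m) * (x ^ (2-a) * exp (-(l*x))))
      = (l^2 - 2*l*m) * (∫ x in Ioi (0:ℝ), x ^ (1-a) * exp (-(l*x)))
        + m^2 * (∫ x in Ioi (0:ℝ), x ^ (1-a) * exp (-(m*x)))
        - l^2*(l-m) * (∫ x in Ioi (0:ℝ), x ^ (2-a) * exp (-(l*x))) := by
    have ia1 : IntegrableOn (fun x : ℝ => (l^2 - 2*l*m) * (x ^ (1-a) * exp (-(l*x))))
        (Ioi 0) := i1.const_mul _
    have ia2 : IntegrableOn (fun x : ℝ => m^2 * (x ^ (1-a) * exp (-(m*x)))) (Ioi 0) :=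
      i2.const_mul _
    have ia : IntegrableOn (fun x : ℝ => (l^2 - 2*l*m) * (x ^ (1-a) * exp (-(l*x)))
        + m^2 * (x ^ (1-a) * exp (-(m*x)))) (Ioi 0) := ia1.add ia2
    have ib : IntegrableOn (fun x : ℝ => l^2*(l-m) * (x ^ (2-a) * exp (-(l*x)))) (Ioi 0) :=
      i3.const_mul _
    rw [integral_sub ia ib, integral_add ia1 ia2, integral_const_mul, integral_const_mul,
      integral_const_mul]
  have e1 : ∫ x in Ioi (0:ℝ), x ^ (1-a) * exp (-(l*x)) = Gamma (2-a) * l ^ (a-2) := by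
    rw [int_rpow_exp_eq' (by linarith) hl, show (1:ℝ)-a+1 = 2-a by ring,
      show -((2:ℝ)-a) = a-2 by ring]
  have e2 : ∫ x in Ioi (0:ℝ), x ^ (1-a) * exp (-(m*x)) = Gamma (2-a) * m ^ (a-2) := by
    rw [int_rpow_exp_eq' (by linarith) hm, show (1:ℝ)-a+1 = 2-a by ring,
      show -((2:ℝ)-a) = a-2 by ring]
  have e3 : ∫ x in Ioi (0:ℝ), x ^ (2-a) * exp (-(l*x)) = Gamma (3-a) * l ^ (a-3) := by
    rw [int_rpow_exp_eq' (by linarith) hl, show (2:ℝ)-a+1 = 3-a by ring,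
      show -((3:ℝ)-a) = a-3 by ring]
  have hG2 : Gamma (2-a) = (1-a) * (-a * Gamma (-a)) := by
    rw [show (2:ℝ)-a = (1-a) + 1 by ring, Real.Gamma_add_one (by
      intro hcon; apply ha1; linarith), show (1:ℝ)-a = -a+1 by ring,
      Real.Gamma_add_one (by intro hcon; apply ne_of_gt ha0; linarith)]
  have hG3 : Gamma (3-a) = (2-a) * Gamma (2-a) := by
    rw [show (3:ℝ)-a = (2-a) + 1 by ring, Real.Gamma_add_one (by
      intro hcon; apply ne_of_gt ha2; linarith)]
  -- power identities
  have pl2 : l^2 * l ^ (a-2) = l ^ a := by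
    rw [← Real.rpow_two, ← Real.rpow_add hl]; norm_num
  have pl1 : l * l ^ (a-2) = l ^ (a-1) := by
    nth_rewrite 1 [← Real.rpow_one l]
    rw [← Real.rpow_add hl]; ring_nf
  have pl3 : l^2 * l ^ (a-3) = l ^ (a-1) := by
    rw [← Real.rpow_two, ← Real.rpow_add hl]; ring_nf
  have pm2 : m^2 * m ^ (a-2) = m ^ a := by
    rw [← Real.rpow_two, ← Real.rpow_add hm]; norm_num
  have pla : l ^ a = l ^ (a-1) * l := by
    rw [← Real.rpow_add_one hl.ne']; ring_nf
  rw [hcongr, hsplit, e1, e2, e3, hG3, hG2]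
  have expand : (l^2 - 2*l*m) * ((1-a) * (-a * Gamma (-a)) * l ^ (a-2))
        + m^2 * ((1-a) * (-a * Gamma (-a)) * m ^ (a-2))
        - l^2*(l-m) * ((2-a) * ((1-a) * (-a * Gamma (-a))) * l ^ (a-3))
      = a*(a-1) * Gamma (-a) * ((l^2 * l^(a-2) - 2*m*(l * l^(a-2))) + m^2*m^(a-2)
          - (2-a)*(l-m)*(l^2 * l^(a-3))) := by ring
  rw [expand, pl2, pl1, pl3, pm2, pla]
  ring

lemma key_integral {a l m : ℝ} (ha0 : 0 < a) (ha2 : a < 2) (ha1 : a ≠ 1)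
    (hl : 0 < l) (hm : 0 < m) :
    ∫ x in Ioi (0:ℝ), x ^ (-a-1) * h l m x
      = Gamma (-a) * ((a-1) * l ^ a - a * m * l ^ (a-1) + m ^ a) := by
  have h1 := step1 ha0 ha2 hl hm
  have h2 := step2 ha0 ha2 ha1 hl hm
  have h3 := I2_value ha0 ha2 ha1 hl hm
  have ha0' : a ≠ 0 := ne_of_gt ha0
  have key : a * (a-1) * (∫ x in Ioi (0:ℝ), x ^ (-a-1) * h l m x)
      = a * (a-1) * (Gamma (-a) * ((a-1) * l ^ a - a * m * l ^ (a-1) + m ^ a)) := by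
    linear_combination (-(a-1))*h1 - h2 + h3
  have hne : a * (a-1) ≠ 0 := by
    apply mul_ne_zero ha0'
    intro hcon; apply ha1; linarith
  exact mul_left_cancel₀ hne key

lemma integrand_eq {a C l m x : ℝ} (hx : 0 < x) :
    (exp (-((l - m) * x)) * Real.log (exp (-((l - m) * x))) - exp (-((l - m) * x)) + 1)
      * (C * exp (-(m * x)) * x ^ (-a - 1)) = C * (x ^ (-a-1) * h l m x) := by
  have hee : exp (-((l - m) * x)) * exp (-(m * x)) = exp (-(l * x)) := by
    rw [← Real.exp_add]; ring_nf
  calc (exp (-((l - m) * x)) * Real.log (exp (-((l - m) * x))) - exp (-((l - m) * x)) + 1)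
        * (C * exp (-(m * x)) * x ^ (-a - 1))
      = C * (x ^ (-a-1) * (exp (-(m*x))
          - exp (-((l - m) * x)) * exp (-(m * x))
          - (l-m)*x*(exp (-((l - m) * x)) * exp (-(m * x))))) := by
        rw [Real.log_exp]; ring
    _ = C * (x ^ (-a-1) * h l m x) := by rw [hee]; simp only [h]

end KimLeeAux

/-- (Kim–Lee) Relative entropy between two equivalent-martingale CTS processes. -/
theorem cts_kl_divergence_kim_lee (a C lp lm mp mm T : ℝ)
    (ha₀ : 0 < a) (ha₂ : a < 2) (ha₁ : a ≠ 1)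
    (hC : 0 < C) (hlp : 0 < lp) (hlm : 0 < lm) (hmp : 0 < mp) (hmm : 0 < mm)
    (hT : 0 < T) (hdp : lp < 2 * mp) (hdm : lm < 2 * mm)
    (r : ℝ → ℝ)
    (hrp : ∀ x : ℝ, 0 < x → r x = exp (-((lp - mp) * x)))
    (hrm : ∀ x : ℝ, x < 0 → r x = exp (-((lm - mm) * |x|))) :
    T * ∫ x : ℝ, (r x * Real.log (r x) - r x + 1) * ctsDensity a C mp mm x
      = T * C * Gamma (-a) *
        (((a - 1) * lp ^ a - a * mp * lp ^ (a - 1) + mp ^ a)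
          + ((a - 1) * lm ^ a - a * mm * lm ^ (a - 1) + mm ^ a)) := by

  set F : ℝ → ℝ := fun x => (r x * Real.log (r x) - r x + 1) * ctsDensity a C mp mm x with hF
  have eqP : EqOn F (fun x : ℝ => C * (x ^ (-a-1) * KimLeeAux.h lp mp x)) (Ioi 0) := by
    intro x hx
    have hx0 : (0:ℝ) < x := hx
    simp only [hF, ctsDensity, if_pos hx0]
    rw [hrp x hx0]
    exact KimLeeAux.integrand_eq hx0
  have intP0 : IntegrableOn (fun x : ℝ => C * (x ^ (-a-1) * KimLeeAux.h lp mp x)) (Ioi 0) :=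
    (KimLeeAux.int_h ha₀ ha₂ hlp hmp).const_mul C
  have intP : IntegrableOn F (Ioi 0) :=
    intP0.congr_fun (fun x hx => (eqP hx).symm) measurableSet_Ioi
  have valP : ∫ x in Ioi (0:ℝ), F x
      = C * (Gamma (-a) * ((a-1)*lp^a - a*mp*lp^(a-1) + mp^a)) := by
    rw [setIntegral_congr_fun measurableSet_Ioi eqP, integral_const_mul,
      KimLeeAux.key_integral ha₀ ha₂ ha₁ hlp hmp]
  have eqN : EqOn (fun x : ℝ => F (-x))
      (fun x : ℝ => C * (x ^ (-a-1) * KimLeeAux.h lm mm x)) (Ioi 0) := by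
    intro x hx
    have hx0 : (0:ℝ) < x := hx
    have hnx : (-x : ℝ) < 0 := by linarith
    simp only [hF, ctsDensity]
    rw [if_neg (by linarith : ¬ (0:ℝ) < -x), if_pos hnx, hrm (-x) hnx, abs_neg,
      abs_of_pos hx0]
    exact KimLeeAux.integrand_eq hx0
  have intN0 : IntegrableOn (fun x : ℝ => C * (x ^ (-a-1) * KimLeeAux.h lm mm x)) (Ioi 0) :=
    (KimLeeAux.int_h ha₀ ha₂ hlm hmm).const_mul C
  have intNg : IntegrableOn (fun x : ℝ => F (-x)) (Ioi 0) :=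
    intN0.congr_fun (fun x hx => (eqN hx).symm) measurableSet_Ioi
  have A : MeasurableEmbedding (fun x : ℝ => -x) := (Homeomorph.neg ℝ).measurableEmbedding
  have intNIci : IntegrableOn (fun x : ℝ => F (-x)) (Ici 0) := by
    rw [integrableOn_Ici_iff_integrableOn_Ioi]; exact intNg
  have intN : IntegrableOn F (Iic 0) := by
    rw [← Measure.map_neg_eq_self (volume : Measure ℝ), A.integrableOn_map_iff]
    simpa [Function.comp_def, neg_preimage, neg_Iic, neg_zero] using intNIci
  have valN : ∫ x in Iic (0:ℝ), F x
      = C * (Gamma (-a) * ((a-1)*lm^a - a*mm*lm^(a-1) + mm^a)) := by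
    have e0 : ∫ x in Iic (0:ℝ), F x = ∫ x in Ioi (0:ℝ), F (-x) := by
      have := integral_comp_neg_Iic (0:ℝ) (fun y => F (-y))
      simp only [neg_neg, neg_zero] at this
      exact this
    rw [e0, setIntegral_congr_fun measurableSet_Ioi eqN, integral_const_mul,
      KimLeeAux.key_integral ha₀ ha₂ ha₁ hlm hmm]
  have total := intervalIntegral.integral_Iic_add_Ioi intN intP
  rw [valN, valP] at total
  have total2 : integral volume F
      = C * (Gamma (-a) * ((a-1)*lm^a - a*mm*lm^(a-1) + mm^a))
        + C * (Gamma (-a) * ((a-1)*lp^a - a*mp*lp^(a-1) + mp^a)) := total.symm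
  rw [total2]
  ring
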